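/- arXiv:2110.07290 — 3 statements merged into one kernel-verified Lean document; each statement's English description precedes it below -/
import Mathlib

section
/- Let B ⊆ ℝ^(n+1) be compact, strictly convex, with non-empty interior, and let v be a unit vector. Then the orthogonal projection p_v(B) of B onto the hyperplane v^⊥ is a compact strictly convex subset of that hyperplane (≅ ℝ^n) with non-empty interior. -/
open Metric Set
open scoped RealInnerProductSpace

/-- Orthogonal projection of `ℝ^{n+1}` onto the hyperplane orthogonal to `v`. -/
noncomputable def pv {n : ℕ} (v : EuclideanSpace ℝ (Fin (n + 1))) :
    EuclideanSpace ℝ (Fin (n + 1)) →L[ℝ] ↥((ℝ ∙ v)ᗮ) :=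
  Submodule.orthogonalProjection (ℝ ∙ v)ᗮ

/-- `B` is strictly convex: every open segment between two distinct points of `B`
lies in the interior of `B`. -/
def StrictlyConvexSet {V : Type*} [AddCommGroup V] [Module ℝ V] [TopologicalSpace V]
    (B : Set V) : Prop :=
  ∀ x ∈ B, ∀ y ∈ B, x ≠ y → openSegment ℝ x y ⊆ interior B

/-- Points of `B` projecting to the boundary of `p_v(B)`. -/
def D0 {n : ℕ} (B : Set (EuclideanSpace ℝ (Fin (n + 1)))) (v : EuclideanSpace ℝ (Fin (n + 1))) :
    Set (EuclideanSpace ℝ (Fin (n + 1))) :=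
  {x ∈ B | pv v x ∈ frontier (pv v '' B)}

/-- Upper region of `S = ∂B`: points over the interior of `p_v(B)` maximizing `x·v` on the fiber. -/
def Uplus {n : ℕ} (B : Set (EuclideanSpace ℝ (Fin (n + 1)))) (v : EuclideanSpace ℝ (Fin (n + 1))) :
    Set (EuclideanSpace ℝ (Fin (n + 1))) :=
  {x | x ∈ frontier B ∧ pv v x ∈ interior (pv v '' B) ∧
    ∀ y ∈ B, pv v y = pv v x → ⟪y, v⟫ ≤ ⟪x, v⟫}

/-- Lower region of `S = ∂B`: points over the interior of `p_v(B)` minimizing `x·v` on the fiber. -/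
def Uminus {n : ℕ} (B : Set (EuclideanSpace ℝ (Fin (n + 1)))) (v : EuclideanSpace ℝ (Fin (n + 1))) :
    Set (EuclideanSpace ℝ (Fin (n + 1))) :=
  {x | x ∈ frontier B ∧ pv v x ∈ interior (pv v '' B) ∧
    ∀ y ∈ B, pv v y = pv v x → ⟪x, v⟫ ≤ ⟪y, v⟫}

def Dplus {n : ℕ} (B : Set (EuclideanSpace ℝ (Fin (n + 1)))) (v : EuclideanSpace ℝ (Fin (n + 1))) :
    Set (EuclideanSpace ℝ (Fin (n + 1))) := D0 B v ∪ Uplus B v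

def Dminus {n : ℕ} (B : Set (EuclideanSpace ℝ (Fin (n + 1)))) (v : EuclideanSpace ℝ (Fin (n + 1))) :
    Set (EuclideanSpace ℝ (Fin (n + 1))) := D0 B v ∪ Uminus B v

/-- The median of `S` in direction `v`: midpoints of fiber pairs. -/
def median {n : ℕ} (B : Set (EuclideanSpace ℝ (Fin (n + 1)))) (v : EuclideanSpace ℝ (Fin (n + 1))) :
    Set (EuclideanSpace ℝ (Fin (n + 1))) :=
  {z | ∃ xp ∈ Dplus B v, ∃ xm ∈ Dminus B v, pv v xp = pv v xm ∧ z = midpoint ℝ xp xm}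

theorem stmt1 (n : ℕ) (B : Set (EuclideanSpace ℝ (Fin (n + 1))))
    (hBc : IsCompact B) (hBsc : StrictlyConvexSet B) (hBint : (interior B).Nonempty)
    (v : EuclideanSpace ℝ (Fin (n + 1))) (hv : ‖v‖ = 1) :
    IsCompact (pv v '' B) ∧ StrictlyConvexSet (pv v '' B) ∧
      (interior (pv v '' B)).Nonempty := by
  have hsurj : Function.Surjective (pv v) := fun z =>
    ⟨(z : EuclideanSpace ℝ (Fin (n + 1))),
      Submodule.orthogonalProjection_mem_subspace_eq_self z⟩
  have hopen : IsOpenMap (pv v) := (pv v).isOpenMap hsurj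
  refine ⟨hBc.image (pv v).continuous, ?_, ?_⟩
  · rintro _ ⟨x, hx, rfl⟩ _ ⟨y, hy, rfl⟩ hne z hz
    have hxy : x ≠ y := fun h => hne (by rw [h])
    obtain ⟨a, b, ha, hb, hab, rfl⟩ := hz
    have hmem : a • x + b • y ∈ interior B :=
      hBsc x hx y hy hxy ⟨a, b, ha, hb, hab, rfl⟩
    have := hopen.image_interior_subset B ⟨_, hmem, rfl⟩
    simpa [map_add, map_smul] using this
  · obtain ⟨x, hx⟩ := hBint
    exact ⟨pv v x, hopen.image_interior_subset B ⟨x, hx, rfl⟩⟩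
end

section
/- With the notation above (B compact strictly convex with nonempty interior, S = ∂B, median M_v), one has M_v ∩ S = D_v^0; i.e., every point of the median that is the midpoint of two distinct fiber points lies in the interior of B. -/
open Metric Set
open scoped RealInnerProductSpace

lemma pv_surj {n : ℕ} (v : EuclideanSpace ℝ (Fin (n + 1))) :
    Function.Surjective (pv v) :=
  fun k => ⟨k, Submodule.orthogonalProjectionOnto_mem_subspace_eq_self k⟩

lemma pv_inj {n : ℕ} (v : EuclideanSpace ℝ (Fin (n + 1))) (hv : ‖v‖ = 1)
    (y z : EuclideanSpace ℝ (Fin (n+1)))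
    (h1 : pv v y = pv v z) (h2 : ⟪y, v⟫ = ⟪z, v⟫) : y = z := by
  have hker : Submodule.orthogonalProjection (ℝ ∙ v)ᗮ (y - z) = 0 := by
    have := h1
    simp only [pv] at this
    rw [map_sub, this, sub_self]
  rw [Submodule.orthogonalProjectionOnto_eq_zero_iff, Submodule.orthogonal_orthogonal,
    Submodule.mem_span_singleton] at hker
  obtain ⟨c, hc⟩ := hker
  have hcv : ⟪y - z, v⟫ = c := by
    rw [← hc, real_inner_smul_left, real_inner_self_eq_norm_sq, hv]; ring
  rw [inner_sub_left, h2, sub_self] at hcv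
  have : y - z = 0 := by rw [← hc, ← hcv, zero_smul]
  exact sub_eq_zero.mp this

theorem stmt8 (n : ℕ) (B : Set (EuclideanSpace ℝ (Fin (n + 1))))
    (hBc : IsCompact B) (hBsc : StrictlyConvexSet B) (hBint : (interior B).Nonempty)
    (v : EuclideanSpace ℝ (Fin (n + 1))) (hv : ‖v‖ = 1) :
    median B v ∩ frontier B = D0 B v := by
  have hBcl : IsClosed B := hBc.isClosed
  have hopen : IsOpenMap (pv v) := (pv v).isOpenMap (pv_surj v)
  -- interior points project into the interior of the image
  have hint : ∀ x ∈ interior B, pv v x ∈ interior (pv v '' B) := by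
    intro x hx
    have h1 : IsOpen (pv v '' interior B) := hopen _ isOpen_interior
    have h2 : pv v '' interior B ⊆ pv v '' B := image_mono interior_subset
    exact interior_maximal h2 h1 ⟨x, hx, rfl⟩
  ext z
  constructor
  · rintro ⟨⟨xp, hxp, xm, hxm, hpvq, rfl⟩, hzf⟩
    -- xp = xm, else midpoint in interior
    have hxpB : xp ∈ B := by
      rcases hxp with h | h
      · exact h.1
      · exact hBcl.frontier_subset h.1
    have hxmB : xm ∈ B := by
      rcases hxm with h | h
      · exact h.1
      · exact hBcl.frontier_subset h.1
    rw [hBcl.frontier_eq] at hzf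
    have hpm : xp = xm := by
      by_contra hne
      have hmem : midpoint ℝ xp xm ∈ openSegment ℝ xp xm :=
        ⟨1/2, 1/2, by norm_num, by norm_num, by norm_num, by
          rw [midpoint_eq_smul_add, invOf_eq_inv]; module⟩
      have : midpoint ℝ xp xm ∈ interior B := hBsc xp hxpB xm hxmB hne hmem
      exact hzf.2 this
    subst hpm
    rw [midpoint_self] at hzf ⊢
    -- now z := xp ∈ Dplus ∩ Dminus and in frontier B
    rcases hxp with h | hU
    · exact h
    rcases hxm with h | hL
    · exact h
    -- z in Uplus ∩ Uminus: contradiction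
    exfalso
    -- fiber over pv z is {z}
    have hfib : ∀ y ∈ B, pv v y = pv v xp → y = xp := by
      intro y hy hpy
      exact pv_inj v hv y xp hpy (le_antisymm (hU.2.2 y hy hpy) (hL.2.2 y hy hpy))
    obtain ⟨w, hw⟩ := hBint
    have hzint : xp ∈ interior B := by
      by_cases hpw : pv v w = pv v xp
      · have := hfib w (interior_subset hw) hpw
        rwa [← this]
      · -- construct a point of interior B in the fiber
        obtain ⟨ε, hε, hball⟩ := Metric.isOpen_iff.mp isOpen_interior _ hU.2.1
        set d : ↥((ℝ ∙ v)ᗮ) := pv v xp - pv v w with hd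
        have hdne : d ≠ 0 := sub_ne_zero.mpr (Ne.symm hpw)
        set s : ℝ := ε / (2 * ‖d‖) with hs
        have hsd : 0 < ‖d‖ := norm_pos_iff.mpr hdne
        have hspos : 0 < s := div_pos hε (by positivity)
        have hu' : pv v xp + s • d ∈ interior (pv v '' B) := by
          apply hball
          rw [mem_ball, dist_eq_norm]
          have : pv v xp + s • d - pv v xp = s • d := by abel
          rw [this, norm_smul, Real.norm_eq_abs, abs_of_pos hspos, hs]
          rw [div_mul_eq_mul_div, mul_comm 2 ‖d‖, ← div_div]
          rw [mul_div_assoc, div_self (ne_of_gt hsd), mul_one]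
          linarith
        obtain ⟨y, hyB, hy⟩ := interior_subset hu'
        have hwy : w ≠ y := by
          intro h
          have h3 : pv v w = pv v xp + s • d := by rw [h, hy]
          have h4 : (1 + s) • d = 0 := by
            calc (1 + s) • d = d + s • d := by rw [add_smul, one_smul]
              _ = (pv v xp - pv v w) + s • d := by rw [hd]
              _ = (pv v xp + s • d) - pv v w := by abel
              _ = 0 := sub_eq_zero.mpr h3.symm
          rcases smul_eq_zero.mp h4 with h' | h'
          · linarith
          · exact hdne h' 
        set a : ℝ := s / (1 + s) with ha
        set b : ℝ := 1 / (1 + s) with hb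
        have h1s : (0:ℝ) < 1 + s := by linarith
        have hapos : 0 < a := div_pos hspos h1s
        have hbpos : 0 < b := div_pos one_pos h1s
        have hab : a + b = 1 := by
          rw [ha, hb, ← add_div, div_eq_one_iff_eq (ne_of_gt h1s)]
          ring
        have hxseg : a • w + b • y ∈ openSegment ℝ w y :=
          ⟨a, b, hapos, hbpos, hab, rfl⟩
        have hxint : a • w + b • y ∈ interior B :=
          hBsc w (interior_subset hw) y hyB hwy hxseg
        have hxfib : pv v (a • w + b • y) = pv v xp := by
          rw [map_add, map_smul, map_smul, hy, hd]
          have : a • pv v w + b • (pv v xp + s • (pv v xp - pv v w))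
              = (a + b) • pv v xp + (b * s - a) • (pv v xp - pv v w) := by
            module
          rw [this, hab, one_smul]
          have hba : b * s - a = 0 := by
            rw [hb, ha]; ring
          rw [hba, zero_smul, add_zero]
        have := hfib _ (interior_subset hxint) hxfib
        rwa [← this]
    exact hzf.2 hzint
  · intro hz
    refine ⟨⟨z, Or.inl hz, z, Or.inl hz, rfl, (midpoint_self ℝ z).symm⟩, ?_⟩
    constructor
    · exact subset_closure hz.1
    · intro hzint
      have := hint z hzint
      exact hz.2.2 this
end

section
/- (Poincaré–Miranda) Let P = [-R₁,R₁] × ⋯ × [-R_n,R_n] and let g : P → ℝ^n be continuous with g_i(x) ≤ 0 whenever x_i = -R_i and g_i(x) ≥ 0 whenever x_i = R_i, for each i. Then g has at least one zero in P. -/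
open Metric Set MeasureTheory Function

variable {n : ℕ}
local notation "E" => EuclideanSpace ℝ (Fin n)

/-- Uniform approximation of a continuous map by a C¹ map on the closed unit ball. -/
lemma smooth_approx (f : E → E) (hf : Continuous f) {ε : ℝ} (hε : 0 < ε) :
    ∃ p : E → E, ContDiff ℝ 1 p ∧ ∀ x ∈ closedBall (0 : E) 1, ‖p x - f x‖ ≤ ε := by
  have hK : IsCompact (closedBall (0 : E) 2) := isCompact_closedBall _ _
  have huc : UniformContinuousOn f (closedBall (0 : E) 2) :=
    hK.uniformContinuousOn_of_continuous hf.continuousOn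
  rw [Metric.uniformContinuousOn_iff] at huc
  obtain ⟨δ, hδ, hδ'⟩ := huc ε hε
  set δ' : ℝ := min δ 1 with hδ'def
  have hδ'0 : 0 < δ' := lt_min hδ one_pos
  set φ : ContDiffBump (0 : E) := ⟨δ' / 2, δ', by positivity, half_lt_self hδ'0⟩
    with hφdef
  refine ⟨fun x => convolution (φ.normed volume) f (ContinuousLinearMap.lsmul ℝ ℝ) volume x,
    ?_, ?_⟩
  · exact HasCompactSupport.contDiff_convolution_left (n := 1) _ φ.hasCompactSupport_normed
      φ.contDiff_normed hf.locallyIntegrable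
  · intro x hx
    have := φ.dist_normed_convolution_le (μ := volume) hf.aestronglyMeasurable
      (x₀ := x) (ε := ε) ?_
    · rwa [dist_eq_norm] at this
    · intro y hy
      have hyx : dist y x < δ' := by rw [mem_ball] at hy; exact hy
      have hy2 : y ∈ closedBall (0 : E) 2 := by
        have hx' : dist x (0:E) ≤ 1 := by rwa [mem_closedBall] at hx
        have h1 : δ' ≤ 1 := min_le_right δ 1
        have : dist y (0:E) ≤ 2 := by
          calc dist y 0 ≤ dist y x + dist x 0 := dist_triangle _ _ _
          _ ≤ 2 := by linarith
        rwa [mem_closedBall]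
      have hx2 : x ∈ closedBall (0 : E) 2 := closedBall_subset_closedBall (by norm_num) hx
      exact le_of_lt (hδ' y hy2 x hx2 (lt_of_lt_of_le hyx (min_le_left δ 1)))

set_option maxHeartbeats 1000000 in
lemma no_retraction (r : E → E) (W : Set E) (hWo : IsOpen W)
    (hBW : closedBall (0 : E) 1 ⊆ W) (hr : ContDiffOn ℝ 1 r W)
    (hsph : ∀ x ∈ closedBall (0 : E) 1, ‖r x‖ = 1)
    (hid : ∀ x ∈ closedBall (0 : E) 1, ‖x‖ = 1 → r x = x) : False := by
  have hBop : IsOpen (ball (0:E) 1) := isOpen_ball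
  have hBcComp : IsCompact (closedBall (0:E) 1) := isCompact_closedBall _ _
  have hBBc : ball (0:E) 1 ⊆ closedBall (0:E) 1 := ball_subset_closedBall
  set s : E → E := fun y => r y - y with hs
  have hscd : ContDiffOn ℝ 1 s W := hr.sub contDiffOn_id
  set G : E → E →L[ℝ] E := fun x => fderiv ℝ s x with hG
  have hsdiff : ∀ x ∈ W, HasFDerivAt s (G x) x := fun x hx =>
    ((hscd.differentiableOn one_ne_zero x hx).differentiableAt (hWo.mem_nhds hx)).hasFDerivAt
  have hGc : ContinuousOn G W := hscd.continuousOn_fderiv_of_isOpen hWo le_rfl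
  -- matrices
  set bE : Module.Basis (Fin n) ℝ E := (EuclideanSpace.basisFun (Fin n) ℝ).toBasis with hbE
  set TM : (E →L[ℝ] E) →ₗ[ℝ] Matrix (Fin n) (Fin n) ℝ :=
    (LinearMap.toMatrix bE bE).toLinearMap.comp (ContinuousLinearMap.coeLM ℝ) with hTM
  have hTMc : Continuous TM := TM.continuous_of_finiteDimensional
  set M : E → Matrix (Fin n) (Fin n) ℝ := fun x => TM (G x) with hM
  have hMc : ContinuousOn M W := hTMc.comp_continuousOn hGc
  have hdet : ∀ (t : ℝ) (x : E),
      (ContinuousLinearMap.id ℝ E + t • G x).det = (1 + t • M x).det := by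
    intro t x
    rw [ContinuousLinearMap.det, ← LinearMap.det_toMatrix bE]
    congr 1
    simp [hM, hTM, map_add, _root_.map_smul, ContinuousLinearMap.coe_add, LinearMap.toMatrix_id]
  set F : ℝ → E → E := fun t x => x + t • s x with hF
  have hFderiv : ∀ (t : ℝ), ∀ x ∈ W,
      HasFDerivAt (F t) (ContinuousLinearMap.id ℝ E + t • G x) x := fun t x hx =>
    (hasFDerivAt_id x).add ((hsdiff x hx).const_smul t)
  have hFc : ∀ t : ℝ, ContinuousOn (F t) W := fun t =>
    continuousOn_id.add ((hscd.continuousOn).const_smul t)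
  -- Lipschitz bound for s on the closed ball
  obtain ⟨K0, hK0⟩ := hBcComp.exists_bound_of_continuousOn (hGc.mono hBW)
  set K : ℝ := max K0 0 with hKdef
  have hKnn : 0 ≤ K := le_max_right _ _
  have hlip : ∀ x ∈ closedBall (0:E) 1, ∀ y ∈ closedBall (0:E) 1,
      ‖s y - s x‖ ≤ K * ‖y - x‖ := fun x hx y hy =>
    Convex.norm_image_sub_le_of_norm_hasFDerivWithin_le
      (fun z hz => (hsdiff z (hBW hz)).hasFDerivWithinAt)
      (fun z hz => le_trans (hK0 z hz) (le_max_left _ _)) (convex_closedBall _ _) hx hy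
  -- positivity of the determinant for small t, via the tube lemma
  set dd : ℝ × E → ℝ := fun p => (1 + p.1 • M p.2).det with hdd
  have hddc : ContinuousOn dd ((univ : Set ℝ) ×ˢ W) := by
    have h1 : ContinuousOn (fun p : ℝ × E => 1 + p.1 • M p.2) ((univ : Set ℝ) ×ˢ W) := by
      apply continuousOn_const.add
      exact (continuousOn_fst).smul (hMc.comp continuousOn_snd (fun p hp => hp.2))
    exact (Continuous.matrix_det continuous_id).comp_continuousOn h1
  have hO : IsOpen (((univ : Set ℝ) ×ˢ W) ∩ dd ⁻¹' Ioi 0) :=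
    hddc.isOpen_inter_preimage (isOpen_univ.prod hWo) isOpen_Ioi
  have hsub : ({(0:ℝ)} ×ˢ closedBall (0:E) 1) ⊆ ((univ : Set ℝ) ×ˢ W) ∩ dd ⁻¹' Ioi 0 := by
    rintro ⟨t, x⟩ ⟨ht, hx⟩
    simp only [mem_singleton_iff] at ht
    subst ht
    refine ⟨⟨mem_univ _, hBW hx⟩, ?_⟩
    simp [hdd, mem_Ioi]
  obtain ⟨u, v, hu, hv, h0u, hBv, huv⟩ :=
    generalized_tube_lemma isCompact_singleton hBcComp hO hsub
  obtain ⟨η, hη, hηu⟩ := Metric.isOpen_iff.1 hu 0 (h0u rfl)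
  set t₀ : ℝ := min (min (η/2) (1/2)) (1/(2*(K+1))) with ht₀def
  have ht₀pos : 0 < t₀ := by
    refine lt_min (lt_min (by positivity) (by norm_num)) (by positivity)
  have ht₀half : t₀ ≤ 1/2 := le_trans (min_le_left _ _) (min_le_right _ _)
  have ht₀K : t₀ * K < 1 := by
    have h1 : t₀ ≤ 1/(2*(K+1)) := min_le_right _ _
    have h2 : K < K + 1 := by linarith
    calc t₀ * K ≤ (1/(2*(K+1))) * K := by
          exact mul_le_mul_of_nonneg_right h1 hKnn
      _ < 1 := by
          rw [div_mul_eq_mul_div, div_lt_one (by positivity)]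
          nlinarith
  have hdpos : ∀ t ∈ Icc (0:ℝ) t₀, ∀ x ∈ closedBall (0:E) 1, 0 < (1 + t • M x).det := by
    intro t ht x hx
    have htu : t ∈ u := by
      apply hηu
      rw [mem_ball, Real.dist_eq, sub_zero, abs_of_nonneg ht.1]
      calc t ≤ t₀ := ht.2
        _ ≤ η/2 := le_trans (min_le_left _ _) (min_le_left _ _)
        _ < η := by linarith
    have := huv (Set.mk_mem_prod htu (hBv hx))
    exact this.2
  -- injectivity
  have hinj : ∀ t ∈ Icc (0:ℝ) t₀, InjOn (F t) (closedBall (0:E) 1) := by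
    intro t ht x hx y hy hxy
    have h1 : x - y = t • (s y - s x) := by
      rw [smul_sub, sub_eq_sub_iff_add_eq_add, add_comm (t • s y) y]
      exact hxy
    have h2 : ‖x - y‖ ≤ t * K * ‖x - y‖ := by
      calc ‖x - y‖ = t * ‖s y - s x‖ := by
            rw [h1, norm_smul, Real.norm_of_nonneg ht.1]
        _ ≤ t * (K * ‖y - x‖) := by
            exact mul_le_mul_of_nonneg_left (hlip x hx y hy) ht.1
        _ = t * K * ‖x - y‖ := by rw [norm_sub_rev]; ring
    have htK : t * K < 1 := lt_of_le_of_lt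
      (mul_le_mul_of_nonneg_right ht.2 hKnn) ht₀K
    have : ‖x - y‖ ≤ 0 := by nlinarith [norm_nonneg (x - y)]
    have : x - y = 0 := by
      have := le_antisymm this (norm_nonneg _); rwa [norm_eq_zero] at this
    exact sub_eq_zero.1 this
  -- F t maps the closed ball into itself
  have hfix : ∀ (t : ℝ), ∀ x ∈ closedBall (0:E) 1, ‖x‖ = 1 → F t x = x := by
    intro t x hx hx1
    have : s x = 0 := by rw [hs]; simp [hid x hx hx1]
    simp [hF, this]
  have hmaps : ∀ t ∈ Icc (0:ℝ) t₀, MapsTo (F t) (closedBall (0:E) 1) (closedBall (0:E) 1) := by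
    intro t ht x hx
    have hxn : ‖x‖ ≤ 1 := by rwa [mem_closedBall, dist_zero_right] at hx
    have hFt : F t x = (1 - t) • x + t • r x := by
      rw [hF]; simp only [hs, smul_sub, sub_smul, one_smul]; abel
    rw [mem_closedBall, dist_zero_right, hFt]
    have ht1 : t ≤ 1 := le_trans ht.2 (by linarith)
    calc ‖(1 - t) • x + t • r x‖ ≤ ‖(1 - t) • x‖ + ‖t • r x‖ := norm_add_le _ _
      _ = (1 - t) * ‖x‖ + t * ‖r x‖ := by
          rw [norm_smul, norm_smul, Real.norm_of_nonneg (by linarith),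
            Real.norm_of_nonneg ht.1]
      _ ≤ (1 - t) * 1 + t * 1 := by
          rw [hsph x hx]
          have := mul_le_mul_of_nonneg_left hxn (by linarith : (0:ℝ) ≤ 1 - t)
          linarith
      _ = 1 := by ring
  -- the image of the open ball is open
  have hopen : ∀ t ∈ Icc (0:ℝ) t₀, IsOpen (F t '' ball (0:E) 1) := by
    intro t ht
    rw [isOpen_iff_mem_nhds]
    rintro y ⟨x, hxB, rfl⟩
    have hxW : x ∈ W := hBW (hBBc hxB)
    have hdetne : LinearMap.det (ContinuousLinearMap.id ℝ E + t • G x).toLinearMap ≠ 0 := by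
      have h := (hdpos t ht x (hBBc hxB)).ne'
      rw [← hdet t x] at h
      exact h
    set e : E ≃L[ℝ] E :=
      (LinearMap.equivOfDetNeZero _ hdetne).toContinuousLinearEquiv with he
    have hecoe : (e : E →L[ℝ] E) = ContinuousLinearMap.id ℝ E + t • G x := by
      ext v
      rfl
    have hcd : ContDiffAt ℝ 1 (F t) x := by
      have h : ContDiffOn ℝ 1 (F t) W := contDiffOn_id.add (hscd.const_smul t)
      exact h.contDiffAt (hWo.mem_nhds hxW)
    have hstrict : HasStrictFDerivAt (F t) (e : E →L[ℝ] E) x := by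
      have h := hcd.hasStrictFDerivAt one_ne_zero
      rwa [(hFderiv t x hxW).fderiv, ← hecoe] at h
    rw [← hstrict.map_nhds_eq_of_equiv]
    exact Filter.image_mem_map (hBop.mem_nhds hxB)
  -- the open ball is contained in the image of the open ball
  have himage : ∀ t ∈ Icc (0:ℝ) t₀, ball (0:E) 1 ⊆ F t '' ball (0:E) 1 := by
    intro t ht
    have hC : IsCompact (F t '' closedBall (0:E) 1) :=
      hBcComp.image_of_continuousOn ((hFc t).mono hBW)
    have hBC : ∀ y ∈ ball (0:E) 1, y ∈ F t '' closedBall (0:E) 1 →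
        y ∈ F t '' ball (0:E) 1 := by
      rintro y hyB ⟨x, hxBc, rfl⟩
      have hxn : ‖x‖ ≤ 1 := by rwa [mem_closedBall, dist_zero_right] at hxBc
      rcases lt_or_eq_of_le hxn with h | h
      · exact ⟨x, by rwa [mem_ball, dist_zero_right], rfl⟩
      · exfalso
        rw [hfix t x hxBc h] at hyB
        rw [mem_ball, dist_zero_right] at hyB
        exact absurd h (ne_of_lt hyB)
    have hne : F t 0 ∈ F t '' ball (0:E) 1 ∩ ball (0:E) 1 := by
      constructor
      · exact mem_image_of_mem _ (mem_ball_self one_pos)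
      · have h0 : (0:E) ∈ closedBall (0:E) 1 := mem_closedBall_self zero_le_one
        have : F t 0 = t • r 0 := by rw [hF]; simp [hs]
        rw [mem_ball, dist_zero_right, this, norm_smul, Real.norm_of_nonneg ht.1,
          hsph 0 h0, mul_one]
        exact lt_of_le_of_lt ht.2 (lt_of_le_of_lt ht₀half (by norm_num))
    have hpre : IsPreconnected (ball (0:E) 1) := (convex_ball (0:E) 1).isPreconnected
    have hcover : ball (0:E) 1 ⊆ F t '' ball (0:E) 1 ∪ (F t '' closedBall (0:E) 1)ᶜ := by
      intro y hy
      by_cases hyC : y ∈ F t '' closedBall (0:E) 1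
      · exact Or.inl (hBC y hy hyC)
      · exact Or.inr hyC
    have hdisj : ball (0:E) 1 ∩ (F t '' ball (0:E) 1 ∩ (F t '' closedBall (0:E) 1)ᶜ) = ∅ := by
      rw [eq_empty_iff_forall_notMem]
      rintro y ⟨-, hy1, hy2⟩
      exact hy2 (image_mono hBBc hy1)
    rcases (isPreconnected_iff_subset_of_disjoint.1 hpre) _ _
      (hopen t ht) hC.isClosed.isOpen_compl hcover hdisj with h | h
    · exact h
    · exfalso
      have h1 := h hne.2
      exact h1 (image_mono hBBc hne.1)
  -- volume of the image, and the integral identity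
  have hsph0 : volume (sphere (0:E) 1) = 0 := by
    rcases subsingleton_or_nontrivial E with hsub | hnt
    · have : sphere (0:E) 1 = ∅ := by
        rw [eq_empty_iff_forall_notMem]
        intro x hx
        rw [mem_sphere, Subsingleton.elim x 0, dist_self] at hx
        norm_num at hx
      rw [this, measure_empty]
    · exact Measure.addHaar_sphere volume 0 1
  have hvolBc : volume (closedBall (0:E) 1) = volume (ball (0:E) 1) := by
    apply le_antisymm
    · rw [← ball_union_sphere]
      calc volume (ball (0:E) 1 ∪ sphere (0:E) 1)
          ≤ volume (ball (0:E) 1) + volume (sphere (0:E) 1) := measure_union_le _ _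
        _ = volume (ball (0:E) 1) := by rw [hsph0, add_zero]
    · exact measure_mono ball_subset_closedBall
  set V : ℝ := (volume (ball (0:E) 1)).toReal with hV
  have hVpos : 0 < V := by
    rw [hV]
    apply ENNReal.toReal_pos (measure_ball_pos volume 0 one_pos).ne' measure_ball_lt_top.ne
  have hVol : ∀ t ∈ Icc (0:ℝ) t₀, ∫ x in ball (0:E) 1, (1 + t • M x).det = V := by
    intro t ht
    have hcov := integral_image_eq_integral_abs_det_fderiv_smul (μ := volume)
      measurableSet_ball
      (f' := fun x => ContinuousLinearMap.id ℝ E + t • G x)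
      (fun x hx => ((hFderiv t x (hBW (hBBc hx))).hasFDerivWithinAt))
      ((hinj t ht).mono hBBc) (fun _ => (1:ℝ))
    have hLHS : ∫ y in F t '' ball (0:E) 1, (1:ℝ) = V := by
      rw [setIntegral_const, smul_eq_mul, mul_one, hV]
      rw [measureReal_def]
      congr 1
      apply le_antisymm
      · calc volume (F t '' ball (0:E) 1)
            ≤ volume (closedBall (0:E) 1) := by
              apply measure_mono
              intro y ⟨x, hx, hxy⟩
              rw [← hxy]
              exact hmaps t ht (hBBc hx)
          _ = volume (ball (0:E) 1) := hvolBc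
      · exact measure_mono (himage t ht)
    have hRHS : ∫ x in ball (0:E) 1,
        |(ContinuousLinearMap.id ℝ E + t • G x).det| • (1:ℝ) =
        ∫ x in ball (0:E) 1, (1 + t • M x).det := by
      apply setIntegral_congr_fun measurableSet_ball
      intro x hx
      simp only [smul_eq_mul, mul_one]
      rw [hdet t x, abs_of_pos (hdpos t ht x (hBBc hx))]
    rw [hcov, hRHS] at hLHS
    exact hLHS
  -- the polynomial expansion of the determinant
  classical
  set g : Equiv.Perm (Fin n) → Finset (Fin n) → E → ℝ := fun σ S x =>
    ((Equiv.Perm.sign σ : ℤ) : ℝ) * ((∏ i ∈ S, M x (σ i) i) *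
      ∏ i ∈ Finset.univ \ S, (1 : Matrix (Fin n) (Fin n) ℝ) (σ i) i) with hg
  have hexpand : ∀ (t : ℝ) (x : E), (1 + t • M x).det =
      ∑ σ : Equiv.Perm (Fin n), ∑ S ∈ Finset.univ.powerset,
        t ^ S.card * g σ S x := by
    intro t x
    rw [Matrix.det_apply']
    refine Finset.sum_congr rfl fun σ _ => ?_
    have hentry : ∀ i : Fin n, (1 + t • M x) (σ i) i =
        t * M x (σ i) i + (1 : Matrix (Fin n) (Fin n) ℝ) (σ i) i := by
      intro i
      simp [Matrix.add_apply, Matrix.smul_apply, smul_eq_mul]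
      ring
    rw [Finset.prod_congr rfl (fun i _ => hentry i), Finset.prod_add, Finset.mul_sum]
    refine Finset.sum_congr rfl fun S _ => ?_
    rw [Finset.prod_mul_distrib, Finset.prod_const]
    rw [hg]
    ring
  have hgc : ∀ (σ : Equiv.Perm (Fin n)) (S : Finset (Fin n)),
      IntegrableOn (g σ S) (ball (0:E) 1) volume := by
    intro σ S
    have hprodc : ContinuousOn (fun x => ∏ i ∈ S, M x (σ i) i) (closedBall (0:E) 1) := by
      apply continuousOn_finset_prod
      intro i _
      have hel : Continuous (fun m : Matrix (Fin n) (Fin n) ℝ => m (σ i) i) :=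
        continuous_id.matrix_elem (σ i) i
      exact hel.comp_continuousOn (hMc.mono hBW)
    have hcont : ContinuousOn (g σ S) (closedBall (0:E) 1) := by
      rw [hg]
      exact (continuousOn_const.mul (hprodc.mul continuousOn_const))
    exact (hcont.integrableOn_compact hBcComp).mono_set hBBc
  set c : Equiv.Perm (Fin n) → Finset (Fin n) → ℝ := fun σ S =>
    ∫ x in ball (0:E) 1, g σ S x with hcdef
  have hPoly : ∀ t : ℝ, ∫ x in ball (0:E) 1, (1 + t • M x).det =
      ∑ σ : Equiv.Perm (Fin n), ∑ S ∈ Finset.univ.powerset, t ^ S.card * c σ S := by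
    intro t
    have h1 : ∫ x in ball (0:E) 1, (1 + t • M x).det =
        ∫ x in ball (0:E) 1, ∑ σ : Equiv.Perm (Fin n), ∑ S ∈ Finset.univ.powerset,
          t ^ S.card * g σ S x :=
      setIntegral_congr_fun measurableSet_ball (fun x _ => hexpand t x)
    rw [h1, integral_finset_sum _ (fun σ _ => integrable_finset_sum _
      (fun S _ => ((hgc σ S).const_mul (t ^ S.card))))]
    refine Finset.sum_congr rfl fun σ _ => ?_
    rw [integral_finset_sum _ (fun S _ => ((hgc σ S).const_mul (t ^ S.card)))]
    refine Finset.sum_congr rfl fun S _ => ?_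
    exact integral_const_mul _ _
  -- the polynomial is constant, so its value at 1 equals V
  set Q : Polynomial ℝ := (∑ σ : Equiv.Perm (Fin n), ∑ S ∈ Finset.univ.powerset,
      Polynomial.C (c σ S) * Polynomial.X ^ S.card) - Polynomial.C V with hQ
  have hQeval : ∀ t : ℝ, Q.eval t = (∫ x in ball (0:E) 1, (1 + t • M x).det) - V := by
    intro t
    rw [hQ, hPoly t]
    rw [Polynomial.eval_sub, Polynomial.eval_C, Polynomial.eval_finset_sum]
    congr 1
    refine Finset.sum_congr rfl fun σ _ => ?_
    rw [Polynomial.eval_finset_sum]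
    refine Finset.sum_congr rfl fun S _ => ?_
    rw [Polynomial.eval_mul, Polynomial.eval_C, Polynomial.eval_pow, Polynomial.eval_X,
      mul_comm]
  have hQ0 : Q = 0 := by
    apply Polynomial.eq_zero_of_infinite_isRoot
    have hroots : Icc (0:ℝ) t₀ ⊆ {x | Q.IsRoot x} := by
      intro t ht
      simp only [mem_setOf_eq, Polynomial.IsRoot]
      rw [hQeval t, hVol t ht, sub_self]
    exact (Set.Icc_infinite ht₀pos).mono hroots
  have hP1 : ∫ x in ball (0:E) 1, (1 + (1:ℝ) • M x).det = V := by
    have h := hQeval 1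
    rw [hQ0] at h
    simp only [Polynomial.eval_zero] at h
    linarith
  -- but the determinant vanishes at t = 1
  have hzero : ∀ x ∈ ball (0:E) 1, (1 + (1:ℝ) • M x).det = 0 := by
    intro x hx
    have hxW : x ∈ W := hBW (hBBc hx)
    rw [← hdet 1 x]
    by_contra hne
    have hdetA : LinearMap.det (ContinuousLinearMap.id ℝ E + (1:ℝ) • G x).toLinearMap ≠ 0 :=
      hne
    have hrd : HasFDerivAt r (ContinuousLinearMap.id ℝ E + (1:ℝ) • G x) x := by
      have h1 := hsdiff x hxW
      have h2 : HasFDerivAt (fun y => s y + y) (G x + ContinuousLinearMap.id ℝ E) x :=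
        h1.add (hasFDerivAt_id x)
      have h3 : (fun y => s y + y) = r := by
        funext y; rw [hs]; simp
      rw [h3] at h2
      rw [one_smul, add_comm]
      exact h2
    have hconst : (fun y => (inner ℝ (r y) (r y) : ℝ)) =ᶠ[nhds x] fun _ => (1:ℝ) := by
      filter_upwards [hBop.mem_nhds hx] with y hy
      rw [real_inner_self_eq_norm_sq, hsph y (hBBc hy)]
      norm_num
    have hd1 : HasFDerivAt (fun y => (inner ℝ (r y) (r y) : ℝ))
        (0 : EuclideanSpace ℝ (Fin n) →L[ℝ] ℝ) x := by
      have h0 : HasFDerivAt (fun _ : E => (1:ℝ))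
          (0 : EuclideanSpace ℝ (Fin n) →L[ℝ] ℝ) x := hasFDerivAt_const _ _
      exact h0.congr_of_eventuallyEq hconst
    have hd2 := hrd.inner ℝ hrd
    have huniq := hd1.unique hd2
    set e' : E ≃ₗ[ℝ] E := LinearMap.equivOfDetNeZero _ hdetA with he'
    set A : E →L[ℝ] E := ContinuousLinearMap.id ℝ E + (1:ℝ) • G x with hA
    set w : E := e'.symm (r x) with hw
    have hAw : A w = r x := e'.apply_symm_apply (r x)
    have happ := congrFun (congrArg DFunLike.coe huniq) w
    rw [ContinuousLinearMap.zero_apply, ContinuousLinearMap.comp_apply,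
      ContinuousLinearMap.prod_apply, fderivInnerCLM_apply] at happ
    simp only [hAw] at happ
    have hrx1 : ‖r x‖ = 1 := hsph x (hBBc hx)
    rw [real_inner_self_eq_norm_sq, hrx1] at happ
    norm_num at happ
  have hfinal : ∫ x in ball (0:E) 1, (1 + (1:ℝ) • M x).det = 0 := by
    rw [setIntegral_congr_fun measurableSet_ball (fun x hx => hzero x hx)]
    simp
  rw [hP1] at hfinal
  exact absurd hfinal (ne_of_gt hVpos)

set_option maxHeartbeats 1000000 in
theorem brouwer (f : E → E) (hf : Continuous f)
    (hmaps : MapsTo f (closedBall (0:E) 1) (closedBall (0:E) 1)) :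
    ∃ x ∈ closedBall (0:E) 1, f x = x := by
  by_contra hcon
  push_neg at hcon
  have hBcComp : IsCompact (closedBall (0:E) 1) := isCompact_closedBall _ _
  have hBBc : ball (0:E) 1 ⊆ closedBall (0:E) 1 := ball_subset_closedBall
  -- radial projection onto the closed ball
  set π : E → E := fun y => (max 1 ‖y‖)⁻¹ • y with hπ
  have hmaxpos : ∀ y : E, 0 < max 1 ‖y‖ := fun y => lt_of_lt_of_le one_pos (le_max_left _ _)
  have hπc : Continuous π := by
    exact Continuous.smul ((continuous_const.max continuous_norm).inv₀ (fun y => (hmaxpos y).ne')) continuous_id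
  have hπmem : ∀ y : E, π y ∈ closedBall (0:E) 1 := by
    intro y
    rw [mem_closedBall, dist_zero_right, hπ]
    simp only [norm_smul, norm_inv, Real.norm_of_nonneg (le_of_lt (hmaxpos y))]
    rw [inv_mul_le_one₀ (hmaxpos y)]
    exact le_max_right _ _
  have hπid : ∀ y ∈ closedBall (0:E) 1, π y = y := by
    intro y hy
    rw [mem_closedBall, dist_zero_right] at hy
    rw [hπ]
    simp [max_eq_left hy]
  set f₁ : E → E := f ∘ π with hf₁
  have hf₁c : Continuous f₁ := hf.comp hπc
  have hf₁mem : ∀ y : E, f₁ y ∈ closedBall (0:E) 1 := fun y => hmaps (hπmem y)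
  have hf₁eq : ∀ y ∈ closedBall (0:E) 1, f₁ y = f y := fun y hy => by
    rw [hf₁, comp_apply, hπid y hy]
  -- minimum displacement
  obtain ⟨x₀, hx₀, hmin⟩ := hBcComp.exists_isMinOn ⟨0, mem_closedBall_self zero_le_one⟩
    ((hf₁c.sub continuous_id).norm.continuousOn)
  set ε : ℝ := ‖f₁ x₀ - x₀‖ with hε
  have hεpos : 0 < ε := by
    rw [hε, norm_pos_iff, sub_ne_zero]
    rw [hf₁eq x₀ hx₀]
    exact hcon x₀ hx₀
  have hεle : ∀ x ∈ closedBall (0:E) 1, ε ≤ ‖f₁ x - x‖ := fun x hx => hmin hx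
  -- smooth approximation
  obtain ⟨p, hp, hpapprox⟩ := smooth_approx f₁ hf₁c (by positivity : 0 < ε/4)
  set q : E → E := fun x => (1 + ε/4)⁻¹ • p x with hq
  have hqcd : ContDiff ℝ 1 q := hp.const_smul _
  have hppt : ∀ x ∈ closedBall (0:E) 1, ‖p x‖ ≤ 1 + ε/4 := by
    intro x hx
    have h1 := hpapprox x hx
    have h2 : ‖f₁ x‖ ≤ 1 := by
      have := hf₁mem x; rwa [mem_closedBall, dist_zero_right] at this
    calc ‖p x‖ = ‖(p x - f₁ x) + f₁ x‖ := by rw [sub_add_cancel]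
      _ ≤ ‖p x - f₁ x‖ + ‖f₁ x‖ := norm_add_le _ _
      _ ≤ 1 + ε/4 := by linarith
  have hqmaps : ∀ x ∈ closedBall (0:E) 1, ‖q x‖ ≤ 1 := by
    intro x hx
    rw [hq]
    simp only [norm_smul, norm_inv, Real.norm_of_nonneg (by positivity : (0:ℝ) ≤ 1 + ε/4)]
    rw [inv_mul_le_one₀ (by positivity)]
    simpa using hppt x hx
  have hgap : ∀ x ∈ closedBall (0:E) 1, ε/2 ≤ ‖x - q x‖ := by
    intro x hx
    have h1 : ‖q x - p x‖ ≤ ε/4 := by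
      rw [hq]
      have : (1 + ε/4)⁻¹ • p x - p x = ((1 + ε/4)⁻¹ - 1) • p x := by
        rw [sub_smul, one_smul]
      rw [this, norm_smul]
      have h2 : |(1 + ε/4)⁻¹ - 1| = 1 - (1 + ε/4)⁻¹ := by
        rw [abs_of_nonpos (by simp; rw [inv_le_one_iff₀]; right; linarith)]
        ring
      rw [Real.norm_eq_abs, h2]
      have h3 : 1 - (1 + ε/4)⁻¹ = (ε/4) / (1 + ε/4) := by
        field_simp
        ring
      rw [h3]
      calc (ε/4) / (1 + ε/4) * ‖p x‖ ≤ (ε/4) / (1 + ε/4) * (1 + ε/4) := by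
            apply mul_le_mul_of_nonneg_left (hppt x hx) (by positivity)
        _ = ε/4 := by field_simp
    have h4 := hpapprox x hx
    have h5 := hεle x hx
    calc ε/2 = ε - ε/4 - ε/4 := by ring
      _ ≤ ‖f₁ x - x‖ - ‖p x - f₁ x‖ - ‖q x - p x‖ := by linarith
      _ ≤ ‖x - q x‖ := by
          have : ‖f₁ x - x‖ ≤ ‖x - q x‖ + ‖q x - p x‖ + ‖p x - f₁ x‖ := by
            have h6 : f₁ x - x = -(x - q x) + -(q x - p x) + -(p x - f₁ x) := by abel
            rw [h6]
            calc ‖-(x - q x) + -(q x - p x) + -(p x - f₁ x)‖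
                ≤ ‖-(x - q x) + -(q x - p x)‖ + ‖-(p x - f₁ x)‖ := norm_add_le _ _
              _ ≤ ‖-(x - q x)‖ + ‖-(q x - p x)‖ + ‖-(p x - f₁ x)‖ := by
                  linarith [norm_add_le (-(x - q x)) (-(q x - p x))]
              _ = ‖x - q x‖ + ‖q x - p x‖ + ‖p x - f₁ x‖ := by
                  rw [norm_neg, norm_neg, norm_neg]
          linarith
  -- construct the retraction
  set u : E → E := fun x => x - q x with hu
  have hucd : ContDiff ℝ 1 u := contDiff_id.sub hqcd
  set a : E → ℝ := fun x => (inner ℝ (u x) (u x) : ℝ) with ha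
  set b : E → ℝ := fun x => (inner ℝ x (u x) : ℝ) with hb
  set dsc : E → ℝ := fun x => b x ^ 2 + a x * (1 - (inner ℝ x x : ℝ)) with hdsc
  have hacd : ContDiff ℝ 1 a := ContDiff.inner ℝ hucd hucd
  have hbcd : ContDiff ℝ 1 b := ContDiff.inner ℝ contDiff_id hucd
  have hdsccd : ContDiff ℝ 1 dsc := by
    apply ContDiff.add (hbcd.pow 2)
    exact hacd.mul (contDiff_const.sub (ContDiff.inner ℝ contDiff_id contDiff_id))
  have hanorm : ∀ x : E, a x = ‖u x‖ ^ 2 := fun x => real_inner_self_eq_norm_sq _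
  have hax : ∀ x ∈ closedBall (0:E) 1, (ε/2)^2 ≤ a x := by
    intro x hx
    rw [hanorm]
    have h1 := hgap x hx
    have h2 : (0:ℝ) ≤ ε/2 := by positivity
    calc (ε/2)^2 ≤ ‖x - q x‖^2 := pow_le_pow_left₀ h2 h1 2
      _ = ‖u x‖^2 := by simp only [hu]
  have haxpos : ∀ x ∈ closedBall (0:E) 1, 0 < a x := fun x hx =>
    lt_of_lt_of_le (by positivity) (hax x hx)
  have hdscpos : ∀ x ∈ closedBall (0:E) 1, 0 < dsc x := by
    intro x hx
    have hx1 : ‖x‖ ≤ 1 := by rwa [mem_closedBall, dist_zero_right] at hx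
    have hxx : (inner ℝ x x : ℝ) = ‖x‖^2 := real_inner_self_eq_norm_sq _
    rcases lt_or_eq_of_le hx1 with h | h
    · simp only [hdsc]
      have h1 : 0 < 1 - (inner ℝ x x : ℝ) := by
        rw [hxx]
        nlinarith [norm_nonneg x]
      have h2 := mul_pos (haxpos x hx) h1
      nlinarith [sq_nonneg (b x)]
    · simp only [hdsc]
      have h1 : (inner ℝ x x : ℝ) = 1 := by rw [hxx, h]; norm_num
      rw [h1, sub_self, mul_zero, add_zero]
      have hbne : b x ≠ 0 := by
        intro hb0
        have h2 : (inner ℝ x (q x) : ℝ) = 1 := by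
          have h3 : (inner ℝ x (u x) : ℝ) = 0 := hb0
          rw [hu, inner_sub_right, h1] at h3
          linarith
        have h4 : a x ≤ 0 := by
          simp only [ha, hu]
          have hexp : (inner ℝ (x - q x) (x - q x) : ℝ) =
              (inner ℝ x x : ℝ) - 2 * (inner ℝ x (q x) : ℝ) + (inner ℝ (q x) (q x) : ℝ) := by
            rw [inner_sub_left, inner_sub_right, inner_sub_right, real_inner_comm (q x) x]
            ring
          rw [hexp, h1, h2]
          have h5 : (inner ℝ (q x) (q x) : ℝ) = ‖q x‖^2 := real_inner_self_eq_norm_sq _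
          have h6 := hqmaps x hx
          nlinarith [h5, h6, norm_nonneg (q x)]
        exact absurd (haxpos x hx) (not_lt.2 h4)
      positivity
  set WW : Set (EuclideanSpace ℝ (Fin n)) := {x | 0 < dsc x ∧ 0 < a x} with hWW
  have hWWo : IsOpen WW := by
    apply IsOpen.inter
    · exact isOpen_lt continuous_const hdsccd.continuous
    · exact isOpen_lt continuous_const hacd.continuous
  have hBcWW : closedBall (0:E) 1 ⊆ WW := fun x hx => ⟨hdscpos x hx, haxpos x hx⟩
  set lam : E → ℝ := fun x => (Real.sqrt (dsc x) - b x) / a x with hlam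
  set rr : E → E := fun x => x + lam x • u x with hrr
  have hsqrtcd : ContDiffOn ℝ 1 (fun x => Real.sqrt (dsc x)) WW := fun x hx =>
    ((Real.contDiffAt_sqrt (ne_of_gt hx.1)).comp x hdsccd.contDiffAt).contDiffWithinAt
  have hlamcd : ContDiffOn ℝ 1 lam WW :=
    (hsqrtcd.sub hbcd.contDiffOn).div hacd.contDiffOn (fun x hx => ne_of_gt hx.2)
  have hrrcd : ContDiffOn ℝ 1 rr WW := contDiffOn_id.add (hlamcd.smul hucd.contDiffOn)
  have hrrnorm : ∀ x ∈ closedBall (0:E) 1, ‖rr x‖ = 1 := by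
    intro x hx
    have ha0 : 0 < a x := haxpos x hx
    have hd0 : 0 ≤ dsc x := le_of_lt (hdscpos x hx)
    have hsq : Real.sqrt (dsc x) ^ 2 = dsc x := Real.sq_sqrt hd0
    have hxx : (inner ℝ x x : ℝ) = ‖x‖^2 := real_inner_self_eq_norm_sq _
    have hnorm2 : ‖rr x‖^2 = (inner ℝ x x : ℝ) + 2 * lam x * b x + lam x ^2 * a x := by
      simp only [hrr]
      rw [norm_add_sq_real, real_inner_smul_right, norm_smul]
      rw [mul_pow, hanorm, ← hxx]
      simp only [Real.norm_eq_abs, sq_abs]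
      ring
    have h1 : lam x * a x = Real.sqrt (dsc x) - b x := by
      simp only [hlam]; field_simp
    have key : lam x ^2 * a x + 2 * lam x * b x = 1 - (inner ℝ x x : ℝ) := by
      have h2 : lam x ^2 * a x + 2 * lam x * b x = lam x * (lam x * a x) + 2 * lam x * b x := by
        ring
      rw [h2, h1]
      have h3 : lam x * (Real.sqrt (dsc x) - b x) + 2 * lam x * b x =
          lam x * (Real.sqrt (dsc x) + b x) := by ring
      rw [h3]
      simp only [hlam]
      rw [div_mul_eq_mul_div, div_eq_iff (ne_of_gt ha0)]
      have h4 : (Real.sqrt (dsc x) - b x) * (Real.sqrt (dsc x) + b x) =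
          Real.sqrt (dsc x) ^ 2 - b x ^ 2 := by ring
      rw [h4, hsq]
      simp only [hdsc]
      ring
    have hfin : ‖rr x‖^2 = 1 := by
      rw [hnorm2]
      linarith [key]
    have hnn : 0 ≤ ‖rr x‖ := norm_nonneg _
    have : (‖rr x‖ - 1) * (‖rr x‖ + 1) = 0 := by nlinarith
    rcases mul_eq_zero.1 this with h | h
    · linarith
    · linarith
  have hrrid : ∀ x ∈ closedBall (0:E) 1, ‖x‖ = 1 → rr x = x := by
    intro x hx hx1
    have hxx : (inner ℝ x x : ℝ) = 1 := by
      rw [real_inner_self_eq_norm_sq, hx1]; norm_num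
    have hb0 : 0 ≤ b x := by
      simp only [hb, hu]
      rw [inner_sub_right, hxx]
      have hcs := real_inner_le_norm x (q x)
      have h6 := hqmaps x hx
      rw [hx1] at hcs
      nlinarith
    have hd : dsc x = b x ^ 2 := by simp only [hdsc]; rw [hxx]; ring
    have hsqb : Real.sqrt (dsc x) = b x := by rw [hd, Real.sqrt_sq hb0]
    have hlam0 : lam x = 0 := by simp only [hlam]; rw [hsqb, sub_self, zero_div]
    simp only [hrr, hlam0, zero_smul, add_zero]
  exact absurd (no_retraction rr WW hWWo hBcWW hrrcd hrrnorm hrrid) not_false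

/-- The Poincaré–Miranda theorem. -/
theorem stmt14 (n : ℕ) (R : Fin n → ℝ) (hR : ∀ i, 0 < R i)
    (g : (Fin n → ℝ) → (Fin n → ℝ))
    (hg : ContinuousOn g (Set.pi Set.univ fun i => Set.Icc (-(R i)) (R i)))
    (hbot : ∀ i : Fin n, ∀ x ∈ Set.pi Set.univ fun i => Set.Icc (-(R i)) (R i),
      x i = -(R i) → g x i ≤ 0)
    (htop : ∀ i : Fin n, ∀ x ∈ Set.pi Set.univ fun i => Set.Icc (-(R i)) (R i),
      x i = R i → 0 ≤ g x i) :
    ∃ x ∈ Set.pi Set.univ fun i => Set.Icc (-(R i)) (R i), g x = 0 := by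
  classical
  set P : Set (Fin n → ℝ) := Set.pi Set.univ fun i => Set.Icc (-(R i)) (R i) with hP
  set clamp : (Fin n → ℝ) → (Fin n → ℝ) := fun x i => max (-(R i)) (min (R i) (x i))
    with hclamp
  have hclampc : Continuous clamp := by
    apply continuous_pi; intro i
    exact continuous_const.max (continuous_const.min (continuous_apply i))
  have hclampmem : ∀ x, clamp x ∈ P := by
    intro x i _
    refine ⟨le_max_left _ _, ?_⟩
    apply max_le (by linarith [hR i]) (min_le_left _ _)
  have hclampid : ∀ x ∈ P, clamp x = x := by
    intro x hx; funext i
    have hxi := hx i (mem_univ i)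
    simp only [hclamp]
    rw [min_eq_right hxi.2, max_eq_right hxi.1]
  set h : (Fin n → ℝ) → (Fin n → ℝ) := fun x => clamp (clamp x - g (clamp x)) with hh
  have hgcc : Continuous (fun x => g (clamp x)) := hg.comp_continuous hclampc hclampmem
  have hhc : Continuous h := hclampc.comp (hclampc.sub hgcc)
  have hhmem : ∀ x, h x ∈ P := fun x => hclampmem _
  -- transfer to Euclidean space
  set e : EuclideanSpace ℝ (Fin n) ≃L[ℝ] (Fin n → ℝ) := EuclideanSpace.equiv (Fin n) ℝ
    with he
  have hPcomp : IsCompact P := isCompact_univ_pi fun i => isCompact_Icc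
  obtain ⟨C, hC⟩ := hPcomp.exists_bound_of_continuousOn
    (e.symm.continuous.continuousOn : ContinuousOn (fun z => e.symm z) P)
  set ρ : ℝ := max C 1 with hρ
  have hρpos : 0 < ρ := lt_of_lt_of_le one_pos (le_max_right _ _)
  set H : EuclideanSpace ℝ (Fin n) → EuclideanSpace ℝ (Fin n) :=
    fun y => ρ⁻¹ • e.symm (h (e (ρ • y))) with hH
  have hHc : Continuous H := by
    exact (e.symm.continuous.comp (hhc.comp (e.continuous.comp (continuous_const_smul ρ)))).const_smul ρ⁻¹
  have hHmaps : MapsTo H (closedBall (0 : EuclideanSpace ℝ (Fin n)) 1)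
      (closedBall (0 : EuclideanSpace ℝ (Fin n)) 1) := by
    intro y _
    rw [mem_closedBall, dist_zero_right, hH]
    simp only [norm_smul, norm_inv, Real.norm_of_nonneg (le_of_lt hρpos)]
    rw [inv_mul_le_one₀ hρpos]
    calc ‖e.symm (h (e (ρ • y)))‖ ≤ C := hC _ (hhmem _)
      _ ≤ ρ := le_max_left _ _
  obtain ⟨y₀, _, hy₀⟩ := brouwer H hHc hHmaps
  set x : Fin n → ℝ := e (ρ • y₀) with hx
  have hfixed : h x = x := by
    have h1 : ρ⁻¹ • e.symm (h x) = y₀ := hy₀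
    have h2 : e.symm (h x) = ρ • y₀ := by
      have := congrArg (fun z => ρ • z) h1
      simpa [smul_smul, mul_inv_cancel₀ (ne_of_gt hρpos)] using this
    calc h x = e (e.symm (h x)) := (e.apply_symm_apply _).symm
      _ = e (ρ • y₀) := by rw [h2]
      _ = x := rfl
  have hxP : x ∈ P := hfixed ▸ hhmem x
  have hxeq : x = clamp (x - g x) := by
    conv_lhs => rw [← hfixed]
    rw [hh]
    simp only [hclampid x hxP]
  have hcoord : ∀ i, g x i = 0 := by
    intro i
    have hxi : x i = max (-(R i)) (min (R i) (x i - g x i)) := by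
      conv_lhs => rw [hxeq]
      simp only [hclamp, Pi.sub_apply]
    rcases le_or_gt (x i - g x i) (-(R i)) with h1 | h1
    · have hmin : min (R i) (x i - g x i) = x i - g x i :=
        min_eq_right (by linarith [hR i])
      have hxv : x i = -(R i) := by rw [hxi, hmin, max_eq_left h1]
      have hb := hbot i x hxP hxv
      have : 0 ≤ g x i := by linarith [h1, hxv]
      linarith
    · rcases le_or_gt (R i) (x i - g x i) with h2 | h2
      · have hmin : min (R i) (x i - g x i) = R i := min_eq_left h2
        have hxv : x i = R i := by
          rw [hxi, hmin, max_eq_right (by linarith [hR i])]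
        have ht := htop i x hxP hxv
        have : g x i ≤ 0 := by linarith [h2, hxv]
        linarith
      · have hmin : min (R i) (x i - g x i) = x i - g x i := min_eq_right (le_of_lt h2)
        have hxv : x i = x i - g x i := by
          conv_lhs => rw [hxi]
          rw [hmin, max_eq_right (le_of_lt h1)]
        linarith
  exact ⟨x, hxP, funext fun i => hcoord i⟩
end
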